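/- Let m : ℝ → ℝ be any function such that for every t ∈ [0, 27/256] one has m(t) ∈ [1, 4/3] and m(t) = 1 + t·m(t)⁴. Then (4/3 − m(t))/√(1 − 256t/27) tends to √(8/27) as t tends to 27/256 from the left; that is, the melonic generating function has the square-root singular behavior M(t) ∼ 4/3 − √(8/27)·√(1 − t/t_c) near its critical point t_c = 27/256. -/

import Mathlib

open Filter Real Set


/-- Square-root singular behavior of the melonic generating function at `t_c = 27/256`:
if `m t ∈ [1, 4/3]` and `m t = 1 + t·(m t)⁴` on `[0, 27/256]`, then
`(4/3 − m t) / √(1 − 256·t/27) → √(8/27)` as `t → (27/256)⁻`. -/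
theorem melonic_sqrt_singularity (m : ℝ → ℝ)
    (hm : ∀ t ∈ Set.Icc (0 : ℝ) (27 / 256),
      m t ∈ Set.Icc (1 : ℝ) (4 / 3) ∧ m t = 1 + t * (m t) ^ 4) :
    Filter.Tendsto (fun t : ℝ => (4 / 3 - m t) / Real.sqrt (1 - 256 * t / 27))
      (nhdsWithin (27 / 256) (Set.Iio (27 / 256)))
      (nhds (Real.sqrt (8 / 27))) := by
  have hIoo : Set.Ioo (0:ℝ) (27/256) ∈ nhdsWithin (27/256 : ℝ) (Set.Iio (27/256)) :=
    Ioo_mem_nhdsLT_of_mem (by norm_num : (27/256:ℝ) ∈ Set.Ioc (0:ℝ) (27/256))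
  -- m tends to 4/3 from below, by squeeze
  have hsqrt0 : Filter.Tendsto (fun t : ℝ => Real.sqrt (1 - 256*t/27))
      (nhdsWithin (27/256) (Set.Iio (27/256))) (nhds 0) := by
    have hc : Continuous fun t : ℝ => Real.sqrt (1 - 256*t/27) := by fun_prop
    have := (hc.tendsto (27/256)).mono_left
      (nhdsWithin_le_nhds (s := Set.Iio (27/256)))
    convert this using 2
    norm_num
  have hm43 : Filter.Tendsto m (nhdsWithin (27/256) (Set.Iio (27/256))) (nhds (4/3)) := by
    apply tendsto_of_tendsto_of_tendsto_of_le_of_le'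
      (g := fun t : ℝ => 4/3 - 16/27 * Real.sqrt (1 - 256*t/27)) (h := fun _ => (4/3 : ℝ))
    · have : Filter.Tendsto (fun t : ℝ => 4/3 - 16/27 * Real.sqrt (1 - 256*t/27))
          (nhdsWithin (27/256) (Set.Iio (27/256))) (nhds (4/3 - 16/27 * 0)) :=
        (tendsto_const_nhds.sub (hsqrt0.const_mul _))
      simpa using this
    · exact tendsto_const_nhds
    · filter_upwards [hIoo] with t ht
      obtain ⟨⟨h1, h2⟩, heq⟩ := hm t ⟨ht.1.le, ht.2.le⟩
      have hle : (4 - 3*m t)^2 ≤ 256/81 * (1 - 256*t/27) := by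
        nlinarith [sq_nonneg (4-3*m t), mul_nonneg (sub_nonneg.2 h2) (sub_nonneg.2 h1),
          sq_nonneg (m t-1),
          mul_nonneg (mul_nonneg (sub_nonneg.2 h2) (sub_nonneg.2 h2)) (sub_nonneg.2 h1),
          sq_nonneg ((4-3*m t)*(m t-1)), mul_nonneg (sq_nonneg (4-3*m t)) (sub_nonneg.2 h1),
          ht.1.le, ht.2.le]
      have hnn : (0:ℝ) ≤ 1 - 256*t/27 := by nlinarith [ht.2.le]
      have := Real.sqrt_le_sqrt hle
      rw [Real.sqrt_sq (by linarith : (0:ℝ) ≤ 4 - 3*m t),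
        Real.sqrt_mul (by norm_num : (0:ℝ) ≤ 256/81),
        show Real.sqrt (256/81) = 16/9 by
          rw [show (256/81:ℝ) = (16/9)^2 by norm_num, Real.sqrt_sq (by norm_num)]] at this
      linarith
    · filter_upwards [hIoo] with t ht
      exact (hm t ⟨ht.1.le, ht.2.le⟩).1.2
  -- the auxiliary function F
  have hS32 : Real.sqrt (3*(4/3:ℝ)^2 + 8*(4/3) + 16) ≠ 0 := by
    rw [Real.sqrt_ne_zero' ]; norm_num
  have hF : Filter.Tendsto (fun x : ℝ => Real.sqrt 3 * x^2 / Real.sqrt (3*x^2 + 8*x + 16))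
      (nhds (4/3)) (nhds (Real.sqrt 3 * (4/3:ℝ)^2 / Real.sqrt (3*(4/3:ℝ)^2 + 8*(4/3) + 16))) := by
    apply ContinuousAt.tendsto
    apply ContinuousAt.div
    · fun_prop
    · fun_prop
    · exact hS32
  -- the limit value is √(8/27)
  have hval : Real.sqrt 3 * (4/3:ℝ)^2 / Real.sqrt (3*(4/3:ℝ)^2 + 8*(4/3) + 16)
      = Real.sqrt (8/27) := by
    have h32 : (3*(4/3:ℝ)^2 + 8*(4/3) + 16) = 32 := by norm_num
    rw [h32]
    rw [div_eq_iff (by positivity : Real.sqrt 32 ≠ 0)]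
    rw [← Real.sqrt_mul (by norm_num : (0:ℝ) ≤ 8/27)]
    rw [show (8/27 * 32 : ℝ) = (16/9)^2 * 3 by norm_num,
      Real.sqrt_mul (sq_nonneg _), Real.sqrt_sq (by norm_num : (0:ℝ) ≤ 16/9)]
    ring
  refine Filter.Tendsto.congr' ?_ (by rw [← hval]; exact hF.comp hm43)
  filter_upwards [hIoo] with t ht
  obtain ⟨⟨h1, h2⟩, heq⟩ := hm t ⟨ht.1.le, ht.2.le⟩
  set M := m t with hMdef
  have hlt : M < 4/3 := by
    rcases lt_or_eq_of_le h2 with h | h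
    · exact h
    · exfalso; rw [h] at heq; have : t = 27/256 := by nlinarith
      exact absurd this (ne_of_lt ht.2)
  have hMpos : (0:ℝ) < M := by linarith
  have hden : (0:ℝ) < 3*M^2 + 8*M + 16 := by positivity
  have h43 : (0:ℝ) < 4 - 3*M := by linarith
  have h2' : 1 - 256*t/27 = (4-3*M)^2*(3*M^2+8*M+16)/(27*M^4) := by
    have h0 : M ≠ 0 := ne_of_gt hMpos
    field_simp
    ring_nf
    nlinarith [heq, sq_nonneg M]
  have hs : Real.sqrt (1 - 256*t/27)
      = (4 - 3*M) * Real.sqrt (3*M^2+8*M+16) / (Real.sqrt 27 * M^2) := by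
    have h3 : ((4-3*M) * Real.sqrt (3*M^2+8*M+16) / (Real.sqrt 27 * M^2))^2
        = 1 - 256*t/27 := by
      rw [div_pow, mul_pow, mul_pow, Real.sq_sqrt hden.le,
        Real.sq_sqrt (by norm_num : (0:ℝ) ≤ 27), h2']
      ring
    rw [← h3, Real.sqrt_sq]
    apply div_nonneg (mul_nonneg h43.le (Real.sqrt_nonneg _))
    positivity
  show Real.sqrt 3 * M^2 / Real.sqrt (3*M^2 + 8*M + 16)
      = (4/3 - M) / Real.sqrt (1 - 256*t/27)
  symm
  rw [hs, show Real.sqrt 27 = 3 * Real.sqrt 3 by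
    rw [show (27:ℝ) = 3^2 * 3 by norm_num, Real.sqrt_mul (sq_nonneg _),
      Real.sqrt_sq (by norm_num : (0:ℝ) ≤ 3)]]
  have hS : Real.sqrt (3*M^2+8*M+16) ≠ 0 := by positivity
  have h3' : Real.sqrt 3 ≠ 0 := by positivity
  field_simp
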